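/- Define, for odd i and k ≥ 2, m_k(i) = i - 1 + 2^(k-2) if i mod 2^(k-1) ∈ [1, 2^(k-2)], and m_k(i) = i - 1 - 2^(k-2) otherwise; and m_1(i) = i - 1. Let S_o (resp. S_e) be the set of odd i such that i - 1 is a sum of an odd (resp. even) number of distinct powers of 2 with exponents ≥ 1. Then for every i ∈ S_e and distinct k, k' ≥ 3, there exists i' ∈ S_e with m_{k'}(i') = m_k(i). -/

import Mathlib

/-- m_k(i) = i - 1 + 2^(k-2) if i mod 2^(k-1) ∈ [1, 2^(k-2)], and
m_k(i) = i - 1 - 2^(k-2) otherwise; m_1(i) = i - 1 (as integers). -/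
def adinkraM (k i : ℕ) : ℤ :=
  if k = 1 then (i : ℤ) - 1
  else if 1 ≤ i % 2 ^ (k - 1) ∧ i % 2 ^ (k - 1) ≤ 2 ^ (k - 2) then
    (i : ℤ) - 1 + 2 ^ (k - 2)
  else (i : ℤ) - 1 - 2 ^ (k - 2)

/-- S_o: odd i such that i-1 is a sum of an odd number of distinct powers of 2
with exponents ≥ 1 (i.e. i-1 has an odd number of 1s in binary). -/
def adinkraSo (i : ℕ) : Prop := Odd i ∧ Odd (((i - 1).bits).count true)

/-- S_e: odd i such that i-1 is a sum of an even number of distinct powers of 2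
with exponents ≥ 1. -/
def adinkraSe (i : ℕ) : Prop := Odd i ∧ Even (((i - 1).bits).count true)

/-- For every i ∈ S_e and distinct k, k' ≥ 3 there exists i' ∈ S_e with
m_{k'}(i') = m_k(i). -/
lemma xor_div_two (x y : ℕ) : (x ^^^ y) / 2 = x / 2 ^^^ y / 2 := by
  apply Nat.eq_of_testBit_eq
  intro n
  simp [Nat.testBit_div_two, Nat.testBit_xor]

lemma xor_two_pow_of_testBit_false {j n : ℕ} (h : j.testBit n = false) :
    j ^^^ 2 ^ n = j + 2 ^ n := by
  induction n generalizing j with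
  | zero =>
    have h0 : j % 2 = 0 := by
      simp only [Nat.testBit_zero, decide_eq_false_iff_not] at h
      omega
    have hm : (j ^^^ 1) % 2 = (j + 1) % 2 := Nat.xor_mod_two_eq
    have hd : (j ^^^ 1) / 2 = j / 2 := by
      rw [xor_div_two]; norm_num
    have := Nat.div_add_mod (j ^^^ 1) 2
    have := Nat.div_add_mod j 2
    simp only [pow_zero]
    omega
  | succ n ih =>
    have hb : (j / 2).testBit n = false := by
      rw [Nat.testBit_div_two]; exact h
    have hd : (j ^^^ 2 ^ (n + 1)) / 2 = j / 2 + 2 ^ n := by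
      rw [xor_div_two]
      have : (2 ^ (n + 1)) / 2 = 2 ^ n := by
        rw [pow_succ]; omega
      rw [this, ih hb]
    have hm : (j ^^^ 2 ^ (n + 1)) % 2 = (j + 2 ^ (n + 1)) % 2 := Nat.xor_mod_two_eq
    have h2 : 2 ^ (n + 1) = 2 * 2 ^ n := by ring
    have := Nat.div_add_mod (j ^^^ 2 ^ (n + 1)) 2
    have := Nat.div_add_mod j 2
    omega

lemma xor_two_pow_of_testBit_true {j n : ℕ} (h : j.testBit n = true) :
    2 ^ n ≤ j ∧ j ^^^ 2 ^ n = j - 2 ^ n := by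
  induction n generalizing j with
  | zero =>
    have h0 : j % 2 = 1 := by
      simp only [Nat.testBit_zero, decide_eq_true_eq] at h
      omega
    have hm : (j ^^^ 1) % 2 = (j + 1) % 2 := Nat.xor_mod_two_eq
    have hd : (j ^^^ 1) / 2 = j / 2 := by
      rw [xor_div_two]; norm_num
    have := Nat.div_add_mod (j ^^^ 1) 2
    have := Nat.div_add_mod j 2
    simp only [pow_zero]
    omega
  | succ n ih =>
    have hb : (j / 2).testBit n = true := by
      rw [Nat.testBit_div_two]; exact h
    obtain ⟨hle, heq⟩ := ih hb
    have hd : (j ^^^ 2 ^ (n + 1)) / 2 = j / 2 - 2 ^ n := by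
      rw [xor_div_two]
      have : (2 ^ (n + 1)) / 2 = 2 ^ n := by
        rw [pow_succ]; omega
      rw [this, heq]
    have hm : (j ^^^ 2 ^ (n + 1)) % 2 = (j + 2 ^ (n + 1)) % 2 := Nat.xor_mod_two_eq
    have h2 : 2 ^ (n + 1) = 2 * 2 ^ n := by ring
    have := Nat.div_add_mod (j ^^^ 2 ^ (n + 1)) 2
    have := Nat.div_add_mod j 2
    constructor <;> omega

lemma count_bits_rec {n : ℕ} (hn : n ≠ 0) :
    n.bits.count true = n % 2 + (n / 2).bits.count true := by
  rcases Nat.even_or_odd n with ⟨m, hm⟩ | ⟨m, hm⟩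
  · have hm' : n = 2 * m := by omega
    have hmne : m ≠ 0 := by omega
    have hd : n / 2 = m := by omega
    have hmod : n % 2 = 0 := by omega
    rw [hd, hmod, hm', Nat.bit0_bits m hmne]
    simp
  · have hd : n / 2 = m := by omega
    have hmod : n % 2 = 1 := by omega
    rw [hd, hmod, hm, Nat.bit1_bits m]
    simp
    omega

lemma count_bits_xor (m : ℕ) : ∀ n : ℕ,
    ((m ^^^ n).bits.count true) % 2 = (m.bits.count true + n.bits.count true) % 2 := by
  induction m using Nat.strong_induction_on with
  | _ m ih =>
    intro n
    rcases eq_or_ne m 0 with rfl | hm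
    · simp
    rcases eq_or_ne n 0 with rfl | hn
    · simp
    rcases eq_or_ne (m ^^^ n) 0 with hmn | hmn
    · have hmn' : m = n := xor_eq_zero_iff.mp hmn
      rw [hmn, hmn']
      simp only [Nat.zero_bits, List.count_nil]
      omega
    rw [count_bits_rec hmn, count_bits_rec hm, count_bits_rec hn]
    have hd : (m ^^^ n) / 2 = m / 2 ^^^ n / 2 := xor_div_two m n
    have hmod : (m ^^^ n) % 2 = (m + n) % 2 := Nat.xor_mod_two_eq
    have hih := ih (m / 2) (by omega) (n / 2)
    rw [hd]
    omega

lemma count_bits_two_pow (n : ℕ) : (2 ^ n : ℕ).bits.count true = 1 := by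
  induction n with
  | zero => simp [Nat.one_bits]
  | succ n ih =>
    have : (2 : ℕ) ^ (n + 1) = 2 * 2 ^ n := by ring
    rw [this, Nat.bit0_bits _ (by positivity)]
    simpa using ih

lemma adinkraM_eval {k i : ℕ} (hk : 3 ≤ k) (hi : Odd i) :
    adinkraM k i = if (i - 1).testBit (k - 2) then (i : ℤ) - 1 - 2 ^ (k - 2)
      else (i : ℤ) - 1 + 2 ^ (k - 2) := by
  obtain ⟨a, ha⟩ : ∃ a, k - 2 = a + 1 := ⟨k - 3, by omega⟩
  have hk1 : k - 1 = (a + 1) + 1 := by omega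
  set j := i - 1 with hj
  have hij : i = j + 1 := by
    rcases hi with ⟨t, ht⟩; omega
  have hje : j % 2 = 0 := by
    rcases hi with ⟨t, ht⟩; omega
  -- j % 2^(k-1) decomposition
  have hsplit : j % 2 ^ ((a + 1) + 1) = j % 2 ^ (a + 1) + 2 ^ (a + 1) * (j / 2 ^ (a + 1) % 2) := by
    rw [pow_succ]; exact Nat.mod_mul
  have hlt : j % 2 ^ (a + 1) < 2 ^ (a + 1) := Nat.mod_lt _ (by positivity)
  have hjmod : j % 2 ^ ((a + 1) + 1) % 2 = 0 := by
    rw [Nat.mod_mod_of_dvd _ (dvd_pow_self 2 (by omega))]; exact hje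
  have hb : (j.testBit (a + 1)) = decide (j / 2 ^ (a + 1) % 2 = 1) := Nat.testBit_eq_decide_div_mod_eq
  have him : i % 2 ^ ((a + 1) + 1) = j % 2 ^ ((a + 1) + 1) + 1 := by
    rw [hij]
    have h2 : (2 : ℕ) ≤ 2 ^ ((a + 1) + 1) := by
      calc (2:ℕ) = 2 ^ 1 := by norm_num
      _ ≤ 2 ^ ((a+1)+1) := Nat.pow_le_pow_right (by norm_num) (by omega)
    have hlt2 : j % 2 ^ ((a + 1) + 1) < 2 ^ ((a + 1) + 1) := Nat.mod_lt _ (by positivity)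
    rw [Nat.add_mod, Nat.mod_eq_of_lt (show 1 < 2 ^ ((a+1)+1) by omega)]
    exact Nat.mod_eq_of_lt (by omega)
  rw [adinkraM, if_neg (by omega : k ≠ 1), hk1, ha]
  rcases Nat.mod_two_eq_zero_or_one (j / 2 ^ (a + 1)) with h01 | h01
  · rw [if_pos, if_neg]
    · rw [hb]; simp [h01]
    · rw [him, hsplit, h01]
      constructor
      · omega
      · omega
  · rw [if_neg, if_pos]
    · rw [hb]; simp [h01]
    · rw [him, hsplit, h01]
      intro hc
      omega

theorem stmt4 (i k k' : ℕ) (hi : adinkraSe i) (hk : 3 ≤ k) (hk' : 3 ≤ k')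
    (hne : k ≠ k') :
    ∃ i', adinkraSe i' ∧ adinkraM k' i' = adinkraM k i := by
  obtain ⟨hodd, heven⟩ := hi
  obtain ⟨a, ha⟩ : ∃ a, k - 2 = a + 1 := ⟨k - 3, by omega⟩
  obtain ⟨b, hb⟩ : ∃ b, k' - 2 = b + 1 := ⟨k' - 3, by omega⟩
  have hab : a + 1 ≠ b + 1 := by omega
  set j := i - 1 with hj
  have hij : i = j + 1 := by rcases hodd with ⟨t, ht⟩; omega
  have hje : j % 2 = 0 := by rcases hodd with ⟨t, ht⟩; omega
  set j' := j ^^^ (2 ^ (a + 1) ^^^ 2 ^ (b + 1)) with hj'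
  -- parity of j'
  have hpa : (2 : ℕ) ^ (a + 1) % 2 = 0 := by
    have : (2 : ℕ) ^ (a + 1) = 2 ^ a * 2 := pow_succ 2 a
    omega
  have hpb : (2 : ℕ) ^ (b + 1) % 2 = 0 := by
    have : (2 : ℕ) ^ (b + 1) = 2 ^ b * 2 := pow_succ 2 b
    omega
  have hm1 : j' % 2 = (j + (2 ^ (a + 1) ^^^ 2 ^ (b + 1))) % 2 := Nat.xor_mod_two_eq
  have hm2 : (2 ^ (a + 1) ^^^ 2 ^ (b + 1)) % 2 = (2 ^ (a + 1) + 2 ^ (b + 1)) % 2 :=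
    Nat.xor_mod_two_eq
  have hj'e : j' % 2 = 0 := by omega
  have hodd' : Odd (j' + 1) := ⟨j' / 2, by omega⟩
  have hsub : j' + 1 - 1 = j' := by omega
  refine ⟨j' + 1, ⟨hodd', ?_⟩, ?_⟩
  · -- even count
    rw [hsub]
    rw [Nat.even_iff] at heven ⊢
    have h1 := count_bits_xor j (2 ^ (a + 1) ^^^ 2 ^ (b + 1))
    have h2 := count_bits_xor (2 ^ (a + 1)) (2 ^ (b + 1))
    rw [count_bits_two_pow, count_bits_two_pow] at h2
    rw [← hj'] at h1
    omega
  · rw [adinkraM_eval hk' hodd', adinkraM_eval hk hodd, hsub, ← hj, ha, hb]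
    have hmaskb : (2 ^ (a + 1) ^^^ 2 ^ (b + 1)).testBit (b + 1) = true := by
      simp [Nat.testBit_xor, Nat.testBit_two_pow, hab]
      omega
    have htb' : j'.testBit (b + 1) = !j.testBit (b + 1) := by
      rw [hj', Nat.testBit_xor, hmaskb]
      cases j.testBit (b + 1) <;> simp
    have hxa : (2 ^ (a + 1) : ℕ).testBit (b + 1) = false := by
      simp only [Nat.testBit_two_pow, decide_eq_false_iff_not]
      omega
    have hassoc : j' = (j ^^^ 2 ^ (a + 1)) ^^^ 2 ^ (b + 1) := by
      rw [hj', Nat.xor_assoc]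
    have hxb : (j ^^^ 2 ^ (a + 1)).testBit (b + 1) = j.testBit (b + 1) := by
      rw [Nat.testBit_xor, hxa]
      cases j.testBit (b + 1) <;> simp
    have hAZ : ((2 ^ (a + 1) : ℕ) : ℤ) = 2 ^ (a + 1) := by push_cast; ring
    have hBZ : ((2 ^ (b + 1) : ℕ) : ℤ) = 2 ^ (b + 1) := by push_cast; ring
    rw [← hAZ, ← hBZ, htb', hij]
    cases hA : j.testBit (a + 1) <;> cases hB : j.testBit (b + 1) <;>
        simp only [Bool.not_true, Bool.not_false, Bool.false_eq_true, Bool.true_eq_false,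
          if_true, if_false, ite_true, ite_false, reduceIte]
    · -- a bit false, b bit false : j' = j + 2^(a+1) + 2^(b+1)
      have e1 : j ^^^ 2 ^ (a + 1) = j + 2 ^ (a + 1) := xor_two_pow_of_testBit_false hA
      have e2 : (j + 2 ^ (a + 1)) ^^^ 2 ^ (b + 1) = j + 2 ^ (a + 1) + 2 ^ (b + 1) :=
        xor_two_pow_of_testBit_false (by rw [← e1]; rw [hxb]; exact hB)
      have : j' = j + 2 ^ (a + 1) + 2 ^ (b + 1) := by rw [hassoc, e1, e2]
      omega
    · -- a false, b true : j' = j + 2^(a+1) - 2^(b+1)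
      have e1 : j ^^^ 2 ^ (a + 1) = j + 2 ^ (a + 1) := xor_two_pow_of_testBit_false hA
      obtain ⟨hle, e2⟩ := xor_two_pow_of_testBit_true
        (show (j + 2 ^ (a + 1)).testBit (b + 1) = true by rw [← e1, hxb]; exact hB)
      have : j' = j + 2 ^ (a + 1) - 2 ^ (b + 1) := by rw [hassoc, e1, e2]
      omega
    · -- a true, b false : j' = j - 2^(a+1) + 2^(b+1)
      obtain ⟨hle1, e1⟩ := xor_two_pow_of_testBit_true hA
      have e2 : (j - 2 ^ (a + 1)) ^^^ 2 ^ (b + 1) = j - 2 ^ (a + 1) + 2 ^ (b + 1) :=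
        xor_two_pow_of_testBit_false (by rw [← e1, hxb]; exact hB)
      have : j' = j - 2 ^ (a + 1) + 2 ^ (b + 1) := by rw [hassoc, e1, e2]
      omega
    · -- a true, b true : j' = j - 2^(a+1) - 2^(b+1)
      obtain ⟨hle1, e1⟩ := xor_two_pow_of_testBit_true hA
      obtain ⟨hle2, e2⟩ := xor_two_pow_of_testBit_true
        (show (j - 2 ^ (a + 1)).testBit (b + 1) = true by rw [← e1, hxb]; exact hB)
      have : j' = j - 2 ^ (a + 1) - 2 ^ (b + 1) := by rw [hassoc, e1, e2]
      omega
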